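/- Change of basis between lines (Lemma 2.2(b)): if ℓ = {i, j, i*j} and ℓ' = {i, k, i*k} are two distinct Fano lines through i, then the column vector (E_i^{ℓ, j*k}, F_i^ℓ) equals θPθ·(E_i^{ℓ',j}, F_i^{ℓ'}) where θPθ = (1/2)[[−1,−1],[3,−1]], i.e. E_i^{ℓ,j*k} = −(1/2)(E_i^{ℓ',j} + F_i^{ℓ'}) and F_i^ℓ = (1/2)(3E_i^{ℓ',j} − F_i^{ℓ'}). -/

import Mathlib

noncomputable section

/-- Offset function for the octonion multiplication table: for distinct indices
`i, j` (in `ZMod 7`) with `d = j - i`, `eᵢ eⱼ = ± e_{i + octOff d}`.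
It encodes the rules `eᵢe_{i+1} = e_{i+3}`, `e_{i+1}e_{i+3} = eᵢ`,
`e_{i+3}eᵢ = e_{i+1}` (indices modulo 7). -/
def octOff : ZMod 7 → ZMod 7 := fun d =>
  if d = 1 then 3 else if d = 2 then 6 else if d = 3 then 1
  else if d = 4 then 5 else if d = 5 then 4 else if d = 6 then 2 else 0

/-- Sign in `eᵢ eⱼ = octSgn (j - i) • e_{i*j}` for distinct `i, j`. -/
def octSgn : ZMod 7 → ℝ := fun d => if d = 1 ∨ d = 2 ∨ d = 4 then 1 else -1

/-- The real octonion division algebra: a scalar part and seven imaginary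
coordinates (indexed by `ZMod 7`; index `i` stands for the unit `eᵢ`,
with `e₀ = e₇`). -/
def Oct : Type := ℝ × (ZMod 7 → ℝ)

instance : AddCommGroup Oct := inferInstanceAs (AddCommGroup (ℝ × (ZMod 7 → ℝ)))
instance : Module ℝ Oct := inferInstanceAs (Module ℝ (ℝ × (ZMod 7 → ℝ)))

/-- View an octonion as a pair. -/
def oc (x : Oct) : ℝ × (ZMod 7 → ℝ) := x
/-- Build an octonion from a pair. -/
def om (p : ℝ × (ZMod 7 → ℝ)) : Oct := p

/-- The octonion multiplication: `e₀ = 1` is the unit, `eᵢ² = -1` and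
`eᵢe_{i+1} = e_{i+3} = -e_{i+1}eᵢ` for the imaginary units (indices mod 7). -/
instance : Mul Oct :=
  ⟨fun x y => om
    ((oc x).1 * (oc y).1 - ∑ i : ZMod 7, (oc x).2 i * (oc y).2 i,
     fun k => (oc x).1 * (oc y).2 k + (oc y).1 * (oc x).2 k +
       ∑ i : ZMod 7, ∑ j : ZMod 7,
         (if i ≠ j ∧ k = i + octOff (j - i) then octSgn (j - i) else 0)
           * (oc x).2 i * (oc y).2 j)⟩

instance : One Oct := ⟨om (1, 0)⟩

/-- The imaginary basis units `eᵢ`, `i ∈ ZMod 7` (`e₀ = e₇`). -/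
def e (i : ZMod 7) : Oct := om (0, Pi.single i 1)

/-- For distinct `i, j`, `idx i j = i*j` is the index with `gᵢ + gⱼ = g_{i*j}`,
i.e. `eᵢeⱼ = ± e_{idx i j}`. -/
def idx (i j : ZMod 7) : ZMod 7 := i + octOff (j - i)

/-- A linear endomorphism of the octonions is a derivation. -/
def IsOctDer (d : Oct →ₗ[ℝ] Oct) : Prop := ∀ x y : Oct, d (x * y) = d x * y + x * d y

/-- The quaternion subalgebra `Q_ℓ = ⟨1, eᵢ, eⱼ, e_{i*j}⟩` attached to the
Fano line `ℓ = {i, j, i*j}`. -/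
def Qline (i j : ZMod 7) : Submodule ℝ Oct :=
  Submodule.span ℝ ({1, e i, e j, e (idx i j)} : Set Oct)

/-- `isE i k Q E` says that `E = E_i^{ℓ,k}` : `E(q) = 0` and
`E(q·e_k) = (1/2)(eᵢq)e_k` for all `q ∈ Q = Q_ℓ`. -/
def isE (i k : ZMod 7) (Q : Submodule ℝ Oct) (E : Oct →ₗ[ℝ] Oct) : Prop :=
  ∀ q ∈ Q, E q = 0 ∧ E (q * e k) = (1/2 : ℝ) • ((e i * q) * e k)

/-- `isF i k Q F` says that `F = F_i^{ℓ,k}` : `F(q) = (1/2)[eᵢ, q]` and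
`F(q·e_k) = −(1/2)(q·eᵢ)e_k` for all `q ∈ Q = Q_ℓ`. -/
def isF (i k : ZMod 7) (Q : Submodule ℝ Oct) (F : Oct →ₗ[ℝ] Oct) : Prop :=
  ∀ q ∈ Q, F q = (1/2 : ℝ) • (e i * q - q * e i) ∧
    F (q * e k) = -((1/2 : ℝ) • ((q * e i) * e k))

end

noncomputable section
open Finset

lemma mul_def (x y : Oct) : x * y = om
    ((oc x).1 * (oc y).1 - ∑ i : ZMod 7, (oc x).2 i * (oc y).2 i,
     fun k => (oc x).1 * (oc y).2 k + (oc y).1 * (oc x).2 k +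
       ∑ i : ZMod 7, ∑ j : ZMod 7,
         (if i ≠ j ∧ k = i + octOff (j - i) then octSgn (j - i) else 0)
           * (oc x).2 i * (oc y).2 j) := rfl

lemma mul_e (a b : ZMod 7) (h : a ≠ b) :
    e a * e b = octSgn (b - a) • e (idx a b) := by
  rw [mul_def]
  unfold e om oc idx
  refine Prod.ext ?_ ?_
  · simp [Pi.single_apply, (Ne.symm h)]
    show (0:ℝ) = octSgn (b-a) • (0:ℝ)
    simp
  · funext t
    simp only [Prod.snd, Pi.single_apply, Prod.smul_snd, Pi.smul_apply]
    show _ = octSgn (b - a) • (_ : ℝ)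
    rw [Finset.sum_comm]
    simp only [Pi.single_apply]
    rw [Finset.sum_eq_single b ?_ ?_]
    rotate_left
    · intro c _ hc; simp [hc]
    · simp
    rw [Finset.sum_eq_single a ?_ ?_]
    rotate_left
    · intro c _ hc; simp [hc]
    · simp
    simp [h, Pi.smul_apply, smul_eq_mul]

lemma e_sq (a : ZMod 7) : e a * e a = -(1 : Oct) := by
  rw [mul_def]
  unfold e om oc
  show _ = -((1:ℝ), (0 : ZMod 7 → ℝ))
  rw [Prod.neg_mk]
  refine Prod.ext ?_ ?_
  · simp [Pi.single_apply]
  · funext t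
    simp [Pi.single_apply]

lemma scalar_mul (c : ℝ) (x : Oct) : om (c, 0) * x = c • x := by
  rw [mul_def]
  unfold om oc
  refine Prod.ext ?_ ?_
  · show c * x.1 - _ = c • x.1
    simp
  · funext t
    show c * x.2 t + x.1 * 0 + _ = c • x.2 t
    simp

lemma mul_scalar (c : ℝ) (x : Oct) : x * om (c, 0) = c • x := by
  rw [mul_def]
  unfold om oc
  refine Prod.ext ?_ ?_
  · show x.1 * c - _ = c • x.1
    simp [mul_comm]
  · funext t
    show x.1 * 0 + c * x.2 t + _ = c • x.2 t
    simp

lemma one_mul' (x : Oct) : (1 : Oct) * x = x := by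
  show om (1,0) * x = x
  rw [scalar_mul, one_smul]

lemma mul_one' (x : Oct) : x * (1 : Oct) = x := by
  show x * om (1,0) = x
  rw [mul_scalar, one_smul]

lemma oct_smul_mul (c : ℝ) (x y : Oct) : (c • x) * y = c • (x * y) := by
  rw [mul_def, mul_def]
  unfold om oc
  have h1 : (c • x).1 = c * x.1 := rfl
  have h2 : ∀ i, (c • x).2 i = c * x.2 i := fun _ => rfl
  refine Prod.ext ?_ ?_
  · show (c • x).1 * y.1 - _ = c • (x.1 * y.1 - _)
    rw [h1, smul_eq_mul, mul_sub, Finset.mul_sum]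
    congr 1
    · ring
    · refine Finset.sum_congr rfl fun i _ => ?_
      rw [h2]; ring
  · funext t
    show (c•x).1 * y.2 t + y.1 * (c•x).2 t + _ = c • (_ + _ + _)
    rw [h1, smul_eq_mul]
    simp only [h2, mul_add, Finset.mul_sum]
    congr 1
    · ring
    · refine Finset.sum_congr rfl fun i _ => ?_
      refine Finset.sum_congr rfl fun j _ => ?_
      ring

lemma oct_mul_smul (c : ℝ) (x y : Oct) : x * (c • y) = c • (x * y) := by
  rw [mul_def, mul_def]
  unfold om oc
  have h1 : (c • y).1 = c * y.1 := rfl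
  have h2 : ∀ i, (c • y).2 i = c * y.2 i := fun _ => rfl
  refine Prod.ext ?_ ?_
  · show x.1 * (c • y).1 - _ = c • (x.1 * y.1 - _)
    rw [h1, smul_eq_mul, mul_sub, Finset.mul_sum]
    congr 1
    · ring
    · refine Finset.sum_congr rfl fun i _ => ?_
      rw [h2]; ring
  · funext t
    show x.1 * (c • y).2 t + (c•y).1 * x.2 t + _ = c • (_ + _ + _)
    rw [h1, smul_eq_mul]
    simp only [h2, mul_add, Finset.mul_sum]
    congr 1
    · ring
    · refine Finset.sum_congr rfl fun i _ => ?_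
      refine Finset.sum_congr rfl fun j _ => ?_
      ring

lemma oct_decomp (x : Oct) : x = (oc x).1 • (1 : Oct) + ∑ t : ZMod 7, (oc x).2 t • e t := by
  have key : ∀ (y : ℝ × (ZMod 7 → ℝ)), y = y.1 • ((1:ℝ), (0 : ZMod 7 → ℝ)) +
      ∑ t : ZMod 7, y.2 t • (((0:ℝ), (Pi.single t (1:ℝ) : ZMod 7 → ℝ)) : ℝ × (ZMod 7 → ℝ)) := by
    intro y
    refine Prod.ext ?_ ?_
    · rw [Prod.fst_add, Prod.fst_sum]
      simp
    · rw [Prod.snd_add, Prod.snd_sum]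
      funext s
      simp [Pi.single_apply]
  exact key x

lemma lm_ext {f g : Oct →ₗ[ℝ] Oct} (h1 : f 1 = g 1) (he : ∀ t, f (e t) = g (e t)) :
    f = g := by
  ext x
  rw [oct_decomp x, map_add, map_add, map_smul, map_smul, map_sum, map_sum, h1]
  congr 1
  exact Finset.sum_congr rfl fun t _ => by rw [map_smul, map_smul, he t]

def sgZ : ZMod 7 → ℤ := fun d => if d = 1 ∨ d = 2 ∨ d = 4 then 1 else -1

lemma octSgn_eq (d : ZMod 7) : octSgn d = (sgZ d : ℝ) := by
  unfold octSgn sgZ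
  split <;> simp

lemma trip : ∀ i j k : ZMod 7, i ≠ j → ¬(k = i ∨ k = j ∨ k = idx i j) →
    (i ≠ idx i j) ∧ (i ≠ k) ∧ (i ≠ idx i k) ∧ (j ≠ idx j k) ∧ (k ≠ j) ∧
    (idx i j ≠ idx j k) ∧ (idx i k ≠ j) ∧ (i ≠ idx j k) ∧
    (idx j i = idx i j) ∧ (idx i (idx i j) = j) ∧ (idx (idx i j) i = j) ∧
    (idx k i = idx i k) ∧ (idx i (idx i k) = k) ∧ (idx (idx i k) i = k) ∧
    (idx j (idx j k) = k) ∧ (idx k j = idx j k) ∧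
    (idx (idx i j) (idx j k) = idx i k) ∧ (idx (idx i k) j = idx i (idx j k)) ∧
    (sgZ (i - j) = -sgZ (j - i)) ∧
    (sgZ (idx i j - i) = -sgZ (j - i)) ∧ (sgZ (i - idx i j) = sgZ (j - i)) ∧
    (sgZ (i - k) = -sgZ (k - i)) ∧
    (sgZ (idx i k - i) = -sgZ (k - i)) ∧ (sgZ (i - idx i k) = sgZ (k - i)) ∧
    (sgZ (idx j k - j) * sgZ (j - i) * sgZ (idx j k - idx i j) = -sgZ (k - i)) ∧
    (sgZ (j - k) * sgZ (k - i) * sgZ (j - idx i k) = -sgZ (idx j k - i)) := by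
  decide

lemma cover : ∀ i j k t : ZMod 7, i ≠ j → ¬(k = i ∨ k = j ∨ k = idx i j) →
    t = i ∨ t = j ∨ t = k ∨ t = idx i j ∨ t = idx i k ∨ t = idx j k ∨
    t = idx i (idx j k) := by
  decide

lemma octSgn_sq (d : ZMod 7) : octSgn d * octSgn d = 1 := by
  rw [octSgn_eq, ← Int.cast_mul]
  have : sgZ d * sgZ d = 1 := by unfold sgZ; split <;> norm_num
  rw [this]; norm_num

lemma neg_one_mul' (x : Oct) : (-(1 : Oct)) * x = -x := by
  have h : (-(1 : Oct)) = om (-1, 0) := by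
    show -((1:ℝ), (0 : ZMod 7 → ℝ)) = ((-1:ℝ), (0 : ZMod 7 → ℝ))
    simp
  rw [h, scalar_mul]
  simp

lemma smul_cancel {c : ℝ} (hc : c * c = 1) {x y : Oct} (h : c • x = y) : x = c • y := by
  rw [← h, smul_smul, hc, one_smul]


/-- Lemma 2.2(b): if `ℓ = {i, j, i*j}` and `ℓ' = {i, k, i*k}` are
distinct Fano lines through `i`, then
`E_i^{ℓ,j*k} = −(1/2)(E_i^{ℓ',j} + F_i^{ℓ'})` and
`F_i^ℓ = (1/2)(3E_i^{ℓ',j} − F_i^{ℓ'})`, i.e.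
`(E_i^{ℓ,j*k}, F_i^ℓ) = θPθ·(E_i^{ℓ',j}, F_i^{ℓ'})` with
`θPθ = (1/2)[[−1,−1],[3,−1]]`. -/
theorem stmt11 : ∀ i j k : ZMod 7, i ≠ j →
    k ∉ ({i, j, idx i j} : Set (ZMod 7)) →
    ∀ E₁ F₁ E₂ F₂ : Oct →ₗ[ℝ] Oct,
      isE i (idx j k) (Qline i j) E₁ → isF i (idx j k) (Qline i j) F₁ →
      isE i j (Qline i k) E₂ → isF i j (Qline i k) F₂ →
      E₁ = -((1/2 : ℝ) • (E₂ + F₂)) ∧ F₁ = (1/2 : ℝ) • ((3 : ℝ) • E₂ - F₂) := by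
  intro i j k hij hk E₁ F₁ E₂ F₂ hE1 hF1 hE2 hF2
  have hk' : ¬(k = i ∨ k = j ∨ k = idx i j) := by
    simpa [Set.mem_insert_iff] using hk
  obtain ⟨him, hik, hin, hjK, hkj, hmK, hnj, hiK,
    d1, d2, d3, d4, d5, d6, d7, d8, d9, d10,
    z1, z2, z3, z4, z5, z6, zS1, zS2⟩ := trip i j k hij hk'
  -- ℝ-version sign facts
  have c1 : octSgn (i - j) = -octSgn (j - i) := by
    rw [octSgn_eq, octSgn_eq, z1]; push_cast; ring
  have c2 : octSgn (idx i j - i) = -octSgn (j - i) := by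
    rw [octSgn_eq, octSgn_eq, z2]; push_cast; ring
  have c3 : octSgn (i - idx i j) = octSgn (j - i) := by
    rw [octSgn_eq, octSgn_eq, z3]
  have c4 : octSgn (i - k) = -octSgn (k - i) := by
    rw [octSgn_eq, octSgn_eq, z4]; push_cast; ring
  have c5 : octSgn (idx i k - i) = -octSgn (k - i) := by
    rw [octSgn_eq, octSgn_eq, z5]; push_cast; ring
  have c6 : octSgn (i - idx i k) = octSgn (k - i) := by
    rw [octSgn_eq, octSgn_eq, z6]
  have S1 : octSgn (idx j k - j) * octSgn (j - i) * octSgn (idx j k - idx i j)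
      = -octSgn (k - i) := by
    rw [octSgn_eq, octSgn_eq, octSgn_eq, octSgn_eq, ← Int.cast_mul, ← Int.cast_mul, zS1]
    push_cast; ring
  have S2 : octSgn (j - k) * octSgn (k - i) * octSgn (j - idx i k)
      = -octSgn (idx j k - i) := by
    rw [octSgn_eq, octSgn_eq, octSgn_eq, octSgn_eq, ← Int.cast_mul, ← Int.cast_mul, zS2]
    push_cast; ring
  -- memberships
  have q1 : (1 : Oct) ∈ Qline i j := Submodule.subset_span (by simp)
  have q2 : e i ∈ Qline i j := Submodule.subset_span (by simp)
  have q3 : e j ∈ Qline i j := Submodule.subset_span (by simp)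
  have q4 : e (idx i j) ∈ Qline i j := Submodule.subset_span (by simp)
  have r1 : (1 : Oct) ∈ Qline i k := Submodule.subset_span (by simp)
  have r2 : e i ∈ Qline i k := Submodule.subset_span (by simp)
  have r3 : e k ∈ Qline i k := Submodule.subset_span (by simp)
  have r4 : e (idx i k) ∈ Qline i k := Submodule.subset_span (by simp)
  -- values of E₂, F₂
  have E2_1 : E₂ 1 = 0 := (hE2 1 r1).1
  have F2_1 : F₂ 1 = 0 := by rw [(hF2 1 r1).1, one_mul', mul_one', sub_self, smul_zero]
  have E2_i : E₂ (e i) = 0 := (hE2 (e i) r2).1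
  have F2_i : F₂ (e i) = 0 := by rw [(hF2 (e i) r2).1, sub_self, smul_zero]
  have E2_k : E₂ (e k) = 0 := (hE2 (e k) r3).1
  have F2_k : F₂ (e k) = (1/2 : ℝ) • (octSgn (k - i) • e (idx i k)
      - (-octSgn (k - i)) • e (idx i k)) := by
    rw [(hF2 (e k) r3).1, mul_e i k hik, mul_e k i (Ne.symm hik), d4, c4]
  have E2_n : E₂ (e (idx i k)) = 0 := (hE2 (e (idx i k)) r4).1
  have F2_n : F₂ (e (idx i k)) = (1/2 : ℝ) • ((-octSgn (k - i)) • e k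
      - octSgn (k - i) • e k) := by
    rw [(hF2 (e (idx i k)) r4).1, mul_e i (idx i k) hin, d5,
      mul_e (idx i k) i (Ne.symm hin), d6, c5, c6]
  have E2_j : E₂ (e j) = (1/2 : ℝ) • (octSgn (j - i) • e (idx i j)) := by
    have h := (hE2 1 r1).2
    rw [one_mul', mul_one', mul_e i j hij] at h
    exact h
  have F2_j : F₂ (e j) = -((1/2 : ℝ) • (octSgn (j - i) • e (idx i j))) := by
    have h := (hF2 1 r1).2
    rw [one_mul', one_mul', mul_e i j hij] at h
    exact h
  have E2_m : E₂ (e (idx i j)) = octSgn (j - i) • ((1/2 : ℝ) • (-(e j))) := by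
    have h := (hE2 (e i) r2).2
    rw [mul_e i j hij, map_smul, e_sq, neg_one_mul'] at h
    exact smul_cancel (octSgn_sq _) h
  have F2_m : F₂ (e (idx i j)) = octSgn (j - i) • (-((1/2 : ℝ) • (-(e j)))) := by
    have h := (hF2 (e i) r2).2
    rw [mul_e i j hij, map_smul, e_sq, neg_one_mul'] at h
    exact smul_cancel (octSgn_sq _) h
  have E2_K : E₂ (e (idx j k)) = octSgn (j - k) •
      ((1/2 : ℝ) • (octSgn (k - i) • (octSgn (j - idx i k) • e (idx i (idx j k))))) := by
    have h := (hE2 (e k) r3).2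
    rw [mul_e k j hkj, d8, map_smul, mul_e i k hik, oct_smul_mul,
      mul_e (idx i k) j hnj, d10] at h
    exact smul_cancel (octSgn_sq _) h
  have F2_K : F₂ (e (idx j k)) = octSgn (j - k) •
      (-((1/2 : ℝ) • ((-octSgn (k - i)) • (octSgn (j - idx i k) • e (idx i (idx j k)))))) := by
    have h := (hF2 (e k) r3).2
    rw [mul_e k j hkj, d8, map_smul, mul_e k i (Ne.symm hik), d4, c4, oct_smul_mul,
      mul_e (idx i k) j hnj, d10] at h
    exact smul_cancel (octSgn_sq _) h
  have E2_p : E₂ (e (idx i (idx j k))) = octSgn (j - idx i k) •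
      ((1/2 : ℝ) • ((-octSgn (k - i)) • (octSgn (j - k) • e (idx j k)))) := by
    have h := (hE2 (e (idx i k)) r4).2
    rw [mul_e (idx i k) j hnj, d10, map_smul, mul_e i (idx i k) hin, d5, c5,
      oct_smul_mul, mul_e k j hkj, d8] at h
    exact smul_cancel (octSgn_sq _) h
  have F2_p : F₂ (e (idx i (idx j k))) = octSgn (j - idx i k) •
      (-((1/2 : ℝ) • (octSgn (k - i) • (octSgn (j - k) • e (idx j k))))) := by
    have h := (hF2 (e (idx i k)) r4).2
    rw [mul_e (idx i k) j hnj, d10, map_smul, mul_e (idx i k) i (Ne.symm hin), d6, c6,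
      oct_smul_mul, mul_e k j hkj, d8] at h
    exact smul_cancel (octSgn_sq _) h
  -- values of E₁, F₁
  have A1 : E₁ 1 = 0 := (hE1 1 q1).1
  have B1 : F₁ 1 = 0 := by rw [(hF1 1 q1).1, one_mul', mul_one', sub_self, smul_zero]
  have A_i : E₁ (e i) = 0 := (hE1 (e i) q2).1
  have B_i : F₁ (e i) = 0 := by rw [(hF1 (e i) q2).1, sub_self, smul_zero]
  have A_j : E₁ (e j) = 0 := (hE1 (e j) q3).1
  have B_j : F₁ (e j) = (1/2 : ℝ) • (octSgn (j - i) • e (idx i j)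
      - (-octSgn (j - i)) • e (idx i j)) := by
    rw [(hF1 (e j) q3).1, mul_e i j hij, mul_e j i (Ne.symm hij), d1, c1]
  have A_m : E₁ (e (idx i j)) = 0 := (hE1 (e (idx i j)) q4).1
  have B_m : F₁ (e (idx i j)) = (1/2 : ℝ) • ((-octSgn (j - i)) • e j
      - octSgn (j - i) • e j) := by
    rw [(hF1 (e (idx i j)) q4).1, mul_e i (idx i j) him, d2,
      mul_e (idx i j) i (Ne.symm him), d3, c2, c3]
  have A_K : E₁ (e (idx j k)) = (1/2 : ℝ) • (octSgn (idx j k - i) • e (idx i (idx j k))) := by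
    have h := (hE1 1 q1).2
    rw [one_mul', mul_one', mul_e i (idx j k) hiK] at h
    exact h
  have B_K : F₁ (e (idx j k)) = -((1/2 : ℝ) •
      (octSgn (idx j k - i) • e (idx i (idx j k)))) := by
    have h := (hF1 1 q1).2
    rw [one_mul', one_mul', mul_e i (idx j k) hiK] at h
    exact h
  have A_p : E₁ (e (idx i (idx j k))) = octSgn (idx j k - i) •
      ((1/2 : ℝ) • (-(e (idx j k)))) := by
    have h := (hE1 (e i) q2).2
    rw [mul_e i (idx j k) hiK, map_smul, e_sq, neg_one_mul'] at h
    exact smul_cancel (octSgn_sq _) h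
  have B_p : F₁ (e (idx i (idx j k))) = octSgn (idx j k - i) •
      (-((1/2 : ℝ) • (-(e (idx j k))))) := by
    have h := (hF1 (e i) q2).2
    rw [mul_e i (idx j k) hiK, map_smul, e_sq, neg_one_mul'] at h
    exact smul_cancel (octSgn_sq _) h
  have A_k : E₁ (e k) = octSgn (idx j k - j) • ((1/2 : ℝ) •
      (octSgn (j - i) • (octSgn (idx j k - idx i j) • e (idx i k)))) := by
    have h := (hE1 (e j) q3).2
    rw [mul_e j (idx j k) hjK, d7, map_smul, mul_e i j hij, oct_smul_mul,
      mul_e (idx i j) (idx j k) hmK, d9] at h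
    exact smul_cancel (octSgn_sq _) h
  have B_k : F₁ (e k) = octSgn (idx j k - j) • (-((1/2 : ℝ) •
      ((-octSgn (j - i)) • (octSgn (idx j k - idx i j) • e (idx i k))))) := by
    have h := (hF1 (e j) q3).2
    rw [mul_e j (idx j k) hjK, d7, map_smul, mul_e j i (Ne.symm hij), d1, c1,
      oct_smul_mul, mul_e (idx i j) (idx j k) hmK, d9] at h
    exact smul_cancel (octSgn_sq _) h
  have A_n : E₁ (e (idx i k)) = octSgn (idx j k - idx i j) • ((1/2 : ℝ) •
      ((-octSgn (j - i)) • (octSgn (idx j k - j) • e k))) := by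
    have h := (hE1 (e (idx i j)) q4).2
    rw [mul_e (idx i j) (idx j k) hmK, d9, map_smul, mul_e i (idx i j) him, d2, c2,
      oct_smul_mul, mul_e j (idx j k) hjK, d7] at h
    exact smul_cancel (octSgn_sq _) h
  have B_n : F₁ (e (idx i k)) = octSgn (idx j k - idx i j) • (-((1/2 : ℝ) •
      (octSgn (j - i) • (octSgn (idx j k - j) • e k)))) := by
    have h := (hF1 (e (idx i j)) q4).2
    rw [mul_e (idx i j) (idx j k) hmK, d9, map_smul, mul_e (idx i j) i (Ne.symm him),
      d3, c3, oct_smul_mul, mul_e j (idx j k) hjK, d7] at h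
    exact smul_cancel (octSgn_sq _) h
  have G1app : ∀ x, (-((1/2 : ℝ) • (E₂ + F₂))) x = -((1/2 : ℝ) • (E₂ x + F₂ x)) := by
    intro x; simp
  have G2app : ∀ x, ((1/2 : ℝ) • ((3 : ℝ) • E₂ - F₂)) x
      = (1/2 : ℝ) • ((3 : ℝ) • E₂ x - F₂ x) := by
    intro x; simp
  have sq1 : octSgn (j - k) * octSgn (j - k) = 1 := octSgn_sq _
  have sq2 : octSgn (j - idx i k) * octSgn (j - idx i k) = 1 := octSgn_sq _
  constructor
  · apply lm_ext
    · rw [A1, G1app, E2_1, F2_1]; simp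
    · intro t
      rcases cover i j k t hij hk' with rfl | rfl | rfl | rfl | rfl | rfl | rfl
      · rw [A_i, G1app, E2_i, F2_i]; simp
      · rw [A_j, G1app, E2_j, F2_j]; module
      · rw [A_k, G1app, E2_k, F2_k]
        match_scalars
        linear_combination (1/2 : ℝ) * S1
      · rw [A_m, G1app, E2_m, F2_m]; module
      · rw [A_n, G1app, E2_n, F2_n]
        match_scalars
        linear_combination (-(1/2) : ℝ) * S1
      · rw [A_K, G1app, E2_K, F2_K]
        match_scalars
        linear_combination (1/2 : ℝ) * S2
      · rw [A_p, G1app, E2_p, F2_p]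
        match_scalars
        linear_combination (-(1/2) : ℝ) * S2
  · apply lm_ext
    · rw [B1, G2app, E2_1, F2_1]; simp
    · intro t
      rcases cover i j k t hij hk' with rfl | rfl | rfl | rfl | rfl | rfl | rfl
      · rw [B_i, G2app, E2_i, F2_i]; simp
      · rw [B_j, G2app, E2_j, F2_j]; module
      · rw [B_k, G2app, E2_k, F2_k]
        match_scalars
        linear_combination (1/2 : ℝ) * S1
      · rw [B_m, G2app, E2_m, F2_m]; module
      · rw [B_n, G2app, E2_n, F2_n]
        match_scalars
        linear_combination (-(1/2) : ℝ) * S1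
      · rw [B_K, G2app, E2_K, F2_K]
        match_scalars
        linear_combination (-(1/2) : ℝ) * S2
      · rw [B_p, G2app, E2_p, F2_p]
        match_scalars
        linear_combination (1/2 : ℝ) * S2
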